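/- Let q : Fin n → A be a family of polynomials such that each q i is homogeneous of degree 2 and q j * x_k = x_j * q k for all j, k ∈ Fin n. Then there exists t : Fin n → k such that q i = x_i * (∑_{j} t j • x_j) for all i ∈ Fin n. -/

import Mathlib

open MvPolynomial

private lemma finsupp_degree_one {σ : Type*} {m : σ →₀ ℕ} (h : Finsupp.degree m = 1) :
    ∃ j, m = Finsupp.single j 1 := by
  classical
  have h0 : m ≠ 0 := by
    rintro rfl; simp [map_zero] at h
  obtain ⟨j, hj⟩ : ∃ j, m j ≠ 0 := by
    rw [Finsupp.ne_iff] at h0; simpa using h0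
  have hj' : j ∈ m.support := Finsupp.mem_support_iff.mpr hj
  rw [Finsupp.degree_apply, ← Finset.add_sum_erase _ _ hj'] at h
  have hmj : m j = 1 ∧ ∑ i ∈ m.support.erase j, m i = 0 := by omega
  have hrest := Finset.sum_eq_zero_iff.mp hmj.2
  refine ⟨j, ?_⟩
  ext l
  by_cases hl : l = j
  · subst hl; simp [hmj.1]
  · rw [Finsupp.single_apply, if_neg (fun h => hl h.symm)]
    by_cases hls : l ∈ m.support
    · exact hrest l (Finset.mem_erase.mpr ⟨hl, hls⟩)
    · exact Finsupp.notMem_support_iff.mp hls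

private lemma homog_one_eq_sum {k : Type*} [Field k] {n : ℕ}
    {p : MvPolynomial (Fin n) k} (hp : p.IsHomogeneous 1) :
    p = ∑ j : Fin n, coeff (Finsupp.single j 1) p • X j := by
  ext m
  rw [coeff_sum]
  by_cases h : Finsupp.degree m = 1
  · obtain ⟨j, rfl⟩ := finsupp_degree_one h
    rw [Finset.sum_eq_single j]
    · simp [coeff_smul, coeff_X']
    · intro b _ hb
      have : Finsupp.single b 1 ≠ Finsupp.single j 1 := by
        simp [Finsupp.single_left_inj (one_ne_zero : (1:ℕ) ≠ 0), hb]
      simp [coeff_smul, coeff_X', this]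
    · simp
  · rw [hp.coeff_eq_zero h]
    refine (Finset.sum_eq_zero fun j _ => ?_).symm
    have : Finsupp.single j 1 ≠ m := by
      rintro rfl
      exact h (by simp [Finsupp.degree_apply, Finsupp.support_single_ne_zero _ one_ne_zero])
    simp [coeff_smul, coeff_X', this]

private lemma homog_cancel_X {k : Type*} [Field k] {n : ℕ} {i : Fin n}
    {p : MvPolynomial (Fin n) k} (h : (X i * p).IsHomogeneous 2) : p.IsHomogeneous 1 := by
  intro d hd
  have h2 : coeff (Finsupp.single i 1 + d) (X i * p) ≠ 0 := by rwa [coeff_X_mul]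
  have h3 := h h2
  rw [map_add] at h3
  have h4 : (Finsupp.weight 1) (Finsupp.single i 1) = 1 := by
    rw [show (Finsupp.weight (1 : Fin n → ℕ)) = Finsupp.weight (fun _ => 1) from rfl, ← Finsupp.degree_eq_weight_one]
    simp [Finsupp.degree_apply, Finsupp.support_single_ne_zero _ one_ne_zero]
  omega

/-- If `q : Fin n → k[x_1,…,x_n]` is a family of homogeneous polynomials of
degree 2 with `q j * X l = X j * q l` for all `j, l`, then there is `t : Fin n → k` with
`q i = X i * ∑ j, t j • X j` for all `i`. -/
theorem stmt_13 (k : Type*) [Field k] [CharZero k] (n : ℕ)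
    (q : Fin n → MvPolynomial (Fin n) k)
    (hq : ∀ i : Fin n, (q i).IsHomogeneous 2)
    (hcomm : ∀ j l : Fin n, q j * X l = X j * q l) :
    ∃ t : Fin n → k, ∀ i : Fin n, q i = X i * ∑ j : Fin n, t j • X j := by
  classical
  rcases n with _ | m
  · exact ⟨0, fun i => i.elim0⟩
  -- Step 1: every monomial of q j contains x_j, hence X j ∣ q j
  have key : ∀ (j : Fin (m+1)) (d : Fin (m+1) →₀ ℕ), coeff d (q j) ≠ 0 → d j ≠ 0 := by
    intro j d hd hdj
    have hdeg : Finsupp.degree d = 2 := by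
      rw [Finsupp.degree_eq_weight_one]; exact hq j hd
    obtain ⟨l, hl⟩ : ∃ l, d l ≠ 0 := by
      have : d ≠ 0 := fun h => by simp [h, map_zero] at hdeg
      rw [Finsupp.ne_iff] at this; simpa using this
    have hlj : l ≠ j := fun h => hl (h ▸ hdj)
    have e1 : coeff (d + Finsupp.single l 1) (q j * X l) = coeff d (q j) :=
      coeff_mul_X d l (q j)
    have e2 : coeff (d + Finsupp.single l 1) (X j * q l) = 0 := by
      rw [coeff_X_mul', if_neg]
      simp [Finsupp.mem_support_iff, hdj, Finsupp.single_apply, Ne.symm hlj, hlj]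
    rw [hcomm j l, e2] at e1
    exact hd e1.symm
  have hdvd : ∀ j : Fin (m+1), X j ∣ q j := by
    intro j
    conv_rhs => rw [as_sum (q j)]
    refine Finset.dvd_sum fun d hd => ?_
    rw [X_dvd_monomial]
    exact Or.inr (key j d (Finsupp.mem_support_iff.mp hd))
  choose p hp using hdvd
  -- Step 2: all p j are equal
  have hpeq : ∀ j l : Fin (m+1), p j = p l := by
    intro j l
    have := hcomm j l
    rw [hp j, hp l] at this
    have h2 : X j * (X l * p j) = X j * (X l * p l) := by rw [← this]; ring
    exact mul_left_cancel₀ (X_ne_zero l) (mul_left_cancel₀ (X_ne_zero j) h2)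
  -- Step 3: p 0 is homogeneous of degree 1
  have hph : (p 0).IsHomogeneous 1 := homog_cancel_X (hp 0 ▸ hq 0)
  refine ⟨fun j => coeff (Finsupp.single j 1) (p 0), fun i => ?_⟩
  rw [hp i, hpeq i 0]
  congr 1
  exact homog_one_eq_sum hph
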